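/- For every positive integer n, the alternating sum ∑_{k=0}^{n} (-1)^k * C(n,k) * C(n+k,k) equals (-1)^n. -/

import Mathlib

open Finset

lemma vander (n k : ℕ) (hk : k ≤ n) :
    ((n + k).choose k : ℤ) = ∑ i ∈ range (n + 1), (n.choose i : ℤ) * k.choose i := by
  have h := Nat.add_choose_eq n k k
  rw [Finset.Nat.sum_antidiagonal_eq_sum_range_succ (fun i j => n.choose i * k.choose j)] at h
  have h2 : (n + k).choose k = ∑ i ∈ range (k + 1), n.choose i * k.choose i := by
    rw [h]
    refine Finset.sum_congr rfl fun i hi => ?_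
    rw [Nat.choose_symm (Nat.lt_succ_iff.mp (Finset.mem_range.mp hi))]
  rw [h2]
  push_cast
  refine Finset.sum_subset (by gcongr <;> omega) fun i _ hni => ?_
  have : k < i := by simpa [Nat.lt_succ_iff] using hni
  simp [Nat.choose_eq_zero_of_lt this]

lemma alt_inner_sum (n i : ℕ) (hi : i ≤ n) :
    ∑ k ∈ range (n + 1), (-1 : ℤ) ^ k * n.choose k * k.choose i
      = if i = n then (-1 : ℤ) ^ n else 0 := by
  have step1 : ∑ k ∈ range (n + 1), (-1 : ℤ) ^ k * n.choose k * k.choose i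
      = ∑ k ∈ Ico i (n + 1), (-1 : ℤ) ^ k * n.choose k * k.choose i := by
    refine (Finset.sum_subset (fun k hk => by simp [Finset.mem_Ico, Finset.mem_range] at *; omega) fun k _ hk => ?_).symm
    have : k < i := by
      simp [Finset.mem_Ico, Finset.mem_range] at *; omega
    simp [Nat.choose_eq_zero_of_lt this]
  rw [step1, Finset.sum_Ico_eq_sum_range]
  have key : ∀ m ∈ range (n + 1 - i), (-1 : ℤ) ^ (i + m) * n.choose (i + m) * (i + m).choose i
      = ((-1 : ℤ) ^ i * n.choose i) * ((-1 : ℤ) ^ m * (n - i).choose m) := by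
    intro m hm
    have hm' : i + m ≤ n := by simp at hm; omega
    have := Nat.choose_mul (n := n) (Nat.le_add_right i m)
    have h2 : (n.choose (i + m) : ℤ) * (i + m).choose i
        = (n.choose i : ℤ) * (n - i).choose m := by
      rw [show i + m - i = m by omega] at this
      exact_mod_cast congrArg Nat.cast this
    rw [pow_add]
    push_cast
    linear_combination ((-1:ℤ)^i * (-1:ℤ)^m) * h2
  rw [Finset.sum_congr rfl key, ← Finset.mul_sum]
  rcases eq_or_lt_of_le hi with rfl | hlt
  · simp
  · have hne : n - i ≠ 0 := by omega
    rw [show n + 1 - i = (n - i) + 1 by omega]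
    rw [Int.alternating_sum_range_choose_of_ne hne]
    simp [Nat.ne_of_lt hlt, hlt.ne]

theorem alternating_sum_binom (n : ℕ) (hn : 0 < n) :
    ∑ k ∈ Finset.range (n + 1),
      (-1 : ℤ) ^ k * (Nat.choose n k) * (Nat.choose (n + k) k) = (-1 : ℤ) ^ n := by
  have h1 : ∑ k ∈ Finset.range (n + 1),
      (-1 : ℤ) ^ k * (Nat.choose n k) * (Nat.choose (n + k) k)
      = ∑ k ∈ range (n + 1), ∑ i ∈ range (n + 1),
          (n.choose i : ℤ) * ((-1 : ℤ) ^ k * n.choose k * k.choose i) := by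
    refine Finset.sum_congr rfl fun k hk => ?_
    rw [vander n k (Nat.lt_succ_iff.mp (Finset.mem_range.mp hk)), Finset.mul_sum]
    refine Finset.sum_congr rfl fun i _ => by ring
  rw [h1, Finset.sum_comm]
  have h2 : ∀ i ∈ range (n + 1),
      ∑ k ∈ range (n + 1), (n.choose i : ℤ) * ((-1 : ℤ) ^ k * n.choose k * k.choose i)
      = (n.choose i : ℤ) * (if i = n then (-1 : ℤ) ^ n else 0) := by
    intro i hi
    rw [← Finset.mul_sum, alt_inner_sum n i (Nat.lt_succ_iff.mp (Finset.mem_range.mp hi))]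
  rw [Finset.sum_congr rfl h2]
  simp
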